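/- arXiv:1204.3312 — 3 statements merged into one kernel-verified Lean document; each statement's English description precedes it below -/
import Mathlib

section
/- Let V be a module over a commutative ring R with a bilinear multiplication μ : V ⊗ V → V and an element 1 ∈ V that is a right unit (μ(v ⊗ 1) = v for all v). Define σ : V ⊗ V → V ⊗ V by σ(v ⊗ w) = 1 ⊗ μ(v ⊗ w). Then σ satisfies the Yang–Baxter equation σ₁σ₂σ₁ = σ₂σ₁σ₂ on V^⊗3 if and only if μ is associative. -/
open TensorProduct

variable {R V : Type*} [CommRing R] [AddCommGroup V] [Module R V]

/-- `σ ⊗ id` as an endomorphism of `V ⊗ (V ⊗ V)`. -/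
noncomputable def sigma1 (σ : V ⊗[R] V →ₗ[R] V ⊗[R] V) :
    V ⊗[R] (V ⊗[R] V) →ₗ[R] V ⊗[R] (V ⊗[R] V) :=
  (TensorProduct.assoc R V V V).toLinearMap ∘ₗ (LinearMap.rTensor V σ) ∘ₗ
    (TensorProduct.assoc R V V V).symm.toLinearMap

/-- `id ⊗ σ` as an endomorphism of `V ⊗ (V ⊗ V)`. -/
noncomputable def sigma2 (σ : V ⊗[R] V →ₗ[R] V ⊗[R] V) :
    V ⊗[R] (V ⊗[R] V) →ₗ[R] V ⊗[R] (V ⊗[R] V) :=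
  LinearMap.lTensor V σ

/-- The Yang–Baxter equation for `σ : V ⊗ V → V ⊗ V`. -/
def YangBaxter (σ : V ⊗[R] V →ₗ[R] V ⊗[R] V) : Prop :=
  sigma1 σ ∘ₗ sigma2 σ ∘ₗ sigma1 σ = sigma2 σ ∘ₗ sigma1 σ ∘ₗ sigma2 σ

/-- An extraction map sending `1 ⊗ (1 ⊗ x)` to `x`. -/
noncomputable def extr (μ : V →ₗ[R] V →ₗ[R] V) : V ⊗[R] (V ⊗[R] V) →ₗ[R] V :=
  TensorProduct.lift ((LinearMap.lcomp R V (TensorProduct.lift μ.flip)) ∘ₗ μ.flip)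

lemma extr_tmul (μ : V →ₗ[R] V →ₗ[R] V) (a b c : V) :
    extr μ (a ⊗ₜ (b ⊗ₜ c)) = μ (μ c b) a := by
  simp [extr]

/-- for a bilinear multiplication `μ` with right unit `1`, the map
`σ(v ⊗ w) = 1 ⊗ μ(v ⊗ w)` satisfies the Yang–Baxter equation iff `μ` is associative. -/
theorem assoc_braiding_yang_baxter_iff_associative
    (μ : V →ₗ[R] V →ₗ[R] V) (one : V)
    (hrunit : ∀ v : V, μ v one = v) :
    YangBaxter ((TensorProduct.mk R V V one) ∘ₗ (TensorProduct.lift μ)) ↔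
      ∀ v w u : V, μ (μ v w) u = μ v (μ w u) := by
  constructor
  · intro h v w u
    have h' := LinearMap.ext_iff.mp h (v ⊗ₜ (w ⊗ₜ u))
    simp [YangBaxter, sigma1, sigma2, hrunit] at h'
    have := congrArg (extr μ) h'
    simpa [extr_tmul, hrunit] using this
  · intro h
    unfold YangBaxter
    ext v w u
    simp [sigma1, sigma2, hrunit, h]
end

section
/- Let (S, ◁) be a shelf, V = kS its linearization, and ε : V → k the linear map with ε(a) = 1 for all a ∈ S. Then the map d(a₁,…,aₙ) = Σ_{i=1}^{n} (−1)^{i−1} (a₁◁aᵢ, …, a_{i−1}◁aᵢ, a_{i+1}, …, aₙ) satisfies d ∘ d = 0 on the tensor powers of V. -/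
variable {k : Type*} [CommRing k] {S : Type*}

/-- The `i`-th face on tuples (1-indexed `i` corresponds to `Fin`-index `i`):
`(a₁,…,a_{n+1}) ↦ (a₁◁aᵢ, …, a_{i−1}◁aᵢ, a_{i+1}, …, a_{n+1})`. -/
def shelfFaceTuple (op : S → S → S) {n : ℕ} (i : Fin (n+1)) (a : Fin (n+1) → S) :
    Fin n → S :=
  fun p => if h : (p : ℕ) < (i : ℕ) then op (a p.castSucc) (a i) else a p.succ

variable (k) in
/-- The one-term distributive differential `d(a₁,…,aₙ) =
Σᵢ (−1)^{i−1}(a₁◁aᵢ,…,a_{i−1}◁aᵢ,a_{i+1},…,aₙ)` on the free module on `S^{n+1}`. -/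
noncomputable def shelfD (op : S → S → S) (n : ℕ) :
    ((Fin (n+1) → S) →₀ k) →ₗ[k] ((Fin n → S) →₀ k) :=
  ∑ i : Fin (n+1), ((-1 : k)^(i : ℕ)) • Finsupp.lmapDomain k k (shelfFaceTuple op i)

lemma shelfFaceTuple_apply (op : S → S → S) {n : ℕ} (i : Fin (n+1)) (a : Fin (n+1) → S)
    (p : Fin n) :
    shelfFaceTuple op i a p =
      if _ : (p : ℕ) < (i : ℕ) then op (a ⟨p, by omega⟩) (a i)
      else a ⟨(p : ℕ) + 1, by omega⟩ := rfl

/-- The simplicial-type identity for the faces of a shelf. -/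
lemma shelfFaceTuple_comp (op : S → S → S)
    (selfdistr : ∀ a b c : S, op (op a b) c = op (op a c) (op b c))
    {n : ℕ} (i : Fin (n+1)) (j : Fin (n+2)) (i' : Fin (n+2)) (j' : Fin (n+1))
    (hii' : (i' : ℕ) = (i : ℕ)) (hjj' : (j' : ℕ) = (j : ℕ) - 1)
    (hij : (i : ℕ) < (j : ℕ)) (a : Fin (n+2) → S) :
    shelfFaceTuple op i (shelfFaceTuple op j a) =
      shelfFaceTuple op j' (shelfFaceTuple op i' a) := by
  have hi : (i : ℕ) < n + 1 := i.isLt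
  have hj : (j : ℕ) < n + 2 := j.isLt
  have hi'eq : i' = ⟨(i : ℕ), by omega⟩ := Fin.ext hii'
  have hj1 : (j : ℕ) - 1 + 1 = (j : ℕ) := by omega
  rw [hi'eq]
  funext p
  have hp : (p : ℕ) < n := p.isLt
  simp only [shelfFaceTuple_apply, Fin.val_mk, hjj', hj1, Fin.eta]
  split_ifs <;> first | rfl | exact (selfdistr _ _ _).symm | omega

/-- The alternating double sum of the composed faces vanishes. -/
lemma shelf_key (op : S → S → S)
    (selfdistr : ∀ a b c : S, op (op a b) c = op (op a c) (op b c))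
    (n : ℕ) (a : Fin (n+2) → S) :
    ∑ x : Fin (n+2) × Fin (n+1),
      (((-1 : k)^(x.1 : ℕ) * (-1 : k)^(x.2 : ℕ)) •
        Finsupp.single (shelfFaceTuple op x.2 (shelfFaceTuple op x.1 a)) (1 : k)) = 0 := by
  apply Finset.sum_ninvolution
    (g := fun x : Fin (n+2) × Fin (n+1) =>
      if _ : (x.2 : ℕ) < (x.1 : ℕ) then
        (⟨(x.2 : ℕ), by have := x.2.isLt; omega⟩, ⟨(x.1 : ℕ) - 1, by have := x.1.isLt; omega⟩)
      else
        (⟨(x.2 : ℕ) + 1, by have := x.2.isLt; omega⟩, ⟨(x.1 : ℕ), by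
          have := x.1.isLt; have := x.2.isLt; omega⟩))
  · rintro ⟨j, i⟩
    dsimp only
    by_cases h : (i : ℕ) < (j : ℕ)
    · rw [dif_pos h]
      rw [shelfFaceTuple_comp op selfdistr i j ⟨(i : ℕ), by have := i.isLt; omega⟩
        ⟨(j : ℕ) - 1, by have := j.isLt; omega⟩ rfl rfl h a]
      rw [← add_smul]
      convert zero_smul k _
      obtain ⟨m, hm⟩ : ∃ m, (j : ℕ) = m + 1 := ⟨(j : ℕ) - 1, by omega⟩
      simp [hm, pow_succ]
      ring
    · rw [dif_neg h]
      dsimp only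
      have := i.isLt; have := j.isLt
      rw [← shelfFaceTuple_comp op selfdistr ⟨(j : ℕ), by omega⟩ ⟨(i : ℕ) + 1, by omega⟩
        j i rfl (by simp) (by simp; omega) a]
      rw [← add_smul]
      convert zero_smul k _
      simp [pow_succ]
      ring
  · rintro ⟨j, i⟩ _
    dsimp only
    by_cases h : (i : ℕ) < (j : ℕ)
    · rw [dif_pos h]
      intro hc
      have h1 := congrArg (fun x => (x.1 : ℕ)) hc
      simp at h1; omega
    · rw [dif_neg h]
      intro hc
      have h1 := congrArg (fun x => (x.1 : ℕ)) hc
      simp at h1; omega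
  · intro x; exact Finset.mem_univ _
  · rintro ⟨j, i⟩
    dsimp only
    by_cases h : (i : ℕ) < (j : ℕ)
    · rw [dif_pos h, dif_neg (by simp; omega)]
      have := j.isLt
      exact Prod.ext (Fin.ext (by simp; omega)) (Fin.ext (by simp))
    · rw [dif_neg h, dif_pos (by simp; omega)]
      exact Prod.ext (Fin.ext (by simp)) (Fin.ext (by simp))

/-- for a shelf `(S, ◁)` the one-term distributive differential squares
to zero. -/
theorem shelf_differential_squares_to_zero
    (op : S → S → S)
    (selfdistr : ∀ a b c : S, op (op a b) c = op (op a c) (op b c)) :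
    ∀ n : ℕ, shelfD k op n ∘ₗ shelfD k op (n+1) = 0 := by
  intro n
  apply Finsupp.lhom_ext
  intro a b
  suffices h : (shelfD k op n) ((shelfD k op (n+1)) (Finsupp.single a 1)) = 0 by
    have hb : Finsupp.single a b = b • Finsupp.single a (1 : k) := by
      rw [Finsupp.smul_single, smul_eq_mul, mul_one]
    simp only [LinearMap.comp_apply, hb, map_smul, h, smul_zero, LinearMap.zero_apply]
  have hsingle : ∀ (m : ℕ) (c : Fin (m+1) → S),
      (shelfD k op m) (Finsupp.single c 1) =
        ∑ i : Fin (m+1), ((-1 : k)^(i : ℕ)) •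
          Finsupp.single (shelfFaceTuple op i c) 1 := by
    intro m c
    simp [shelfD, LinearMap.sum_apply, Finsupp.lmapDomain_apply, Finsupp.mapDomain_single]
  rw [hsingle, map_sum]
  simp only [map_smul, hsingle, Finset.smul_sum, smul_smul]
  have key := shelf_key (k := k) op selfdistr n a
  rw [Fintype.sum_prod_type] at key
  exact key
end

section
/- Let (V, [,], 1) be a unital Leibniz algebra with braiding σ(v⊗w) = w⊗v + 1⊗[v,w], and let M be a vector space with a normalized map ρ : M ⊗ V → M (ρ(m⊗1) = m). Then the braided module condition ρ ∘ (ρ ⊗ id) = ρ ∘ (ρ ⊗ id) ∘ (id_M ⊗ σ) is equivalent to the Leibniz module condition m·[v,w] = (m·v)·w − (m·w)·v for all m ∈ M, v, w ∈ V. -/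
open TensorProduct

/-- for a unital Leibniz algebra `(V, [,], 1)` with braiding
`σ(v⊗w) = w⊗v + 1⊗[v,w]` and a normalized map `ρ : M ⊗ V → M` (`ρ(m⊗1) = m`), the
braided module condition `ρ ∘ (ρ ⊗ id) = ρ ∘ (ρ ⊗ id) ∘ (id_M ⊗ σ)` is equivalent to
the Leibniz module condition `m·[v,w] = (m·v)·w − (m·w)·v`. -/
theorem braided_module_iff_leibniz_module
    {k V M : Type*} [CommRing k] [AddCommGroup V] [Module k V]
    [AddCommGroup M] [Module k M]
    (br : V →ₗ[k] V →ₗ[k] V) (one : V)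
    (hLeibniz : ∀ v w u : V, br v (br w u) = br (br v w) u - br (br v u) w)
    (hcentral_l : ∀ v : V, br one v = 0)
    (hcentral_r : ∀ v : V, br v one = 0)
    (ρ : M ⊗[k] V →ₗ[k] M)
    (hnorm : ∀ m : M, ρ (m ⊗ₜ one) = m) :
    (ρ ∘ₗ LinearMap.rTensor V ρ =
      ρ ∘ₗ LinearMap.rTensor V ρ ∘ₗ
        (TensorProduct.assoc k M V V).symm.toLinearMap ∘ₗ
        LinearMap.lTensor M
          ((TensorProduct.comm k V V).toLinearMap +
            (TensorProduct.mk k V V one) ∘ₗ (TensorProduct.lift br)) ∘ₗ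
        (TensorProduct.assoc k M V V).toLinearMap)
    ↔
    (∀ (m : M) (v w : V),
      ρ (m ⊗ₜ br v w) = ρ (ρ (m ⊗ₜ v) ⊗ₜ w) - ρ (ρ (m ⊗ₜ w) ⊗ₜ v)) := by
  constructor
  · intro h m v w
    have := congrArg (fun f => f ((m ⊗ₜ[k] v) ⊗ₜ[k] w)) h
    simp only [LinearMap.comp_apply, LinearMap.rTensor_tmul, LinearEquiv.coe_coe,
      TensorProduct.assoc_tmul, LinearMap.lTensor_tmul, LinearMap.add_apply,
      TensorProduct.comm_tmul, TensorProduct.lift.tmul, TensorProduct.mk_apply,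
      TensorProduct.tmul_add, map_add, TensorProduct.assoc_symm_tmul, hnorm] at this
    rw [this]; abel
  · intro h
    ext m v w
    simp only [LinearMap.comp_apply, LinearMap.rTensor_tmul, LinearEquiv.coe_coe,
      TensorProduct.assoc_tmul, LinearMap.lTensor_tmul, LinearMap.add_apply,
      TensorProduct.comm_tmul, TensorProduct.lift.tmul, TensorProduct.mk_apply,
      TensorProduct.tmul_add, map_add, TensorProduct.assoc_symm_tmul, hnorm,
      LinearMap.coe_comp, Function.comp_apply, AlgebraTensorModule.curry_apply,
      TensorProduct.curry_apply, LinearMap.coe_restrictScalars]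
    rw [h m v w]; abel
end
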